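/- arXiv:1210.4627 — 4 statements merged into one kernel-verified Lean document; each statement's English description precedes it below -/
import Mathlib

section
/- Let U(z) be a p×p matrix-valued function analytic in a neighborhood of z₀, and let λ₀ be an eigenvalue of U(z₀). Suppose (E1) the λ₀-group of perturbed eigenvalues of U(z) consists of 2N eigenvalues λ_1(z), …, λ_{2N}(z), each of algebraic multiplicity 1 for z ≠ z₀ near z₀, forming N cycles of period 2 with Puiseux expansions λ_{2s}(z) = λ₀ + c_s (z−z₀)^{1/2} + O(z−z₀), λ_{2s+1}(z) = λ₀ − c_s (z−z₀)^{1/2} + O(z−z₀) with c_s ≠ 0; and (E2) corresponding eigenvectors can be chosen as g_{2s}(z) = h_s + (z−z₀)^{1/2} k_{2s} + O(z−z₀), g_{2s+1}(z) = h_s + (z−z₀)^{1/2} k_{2s+1} + O(z−z₀), where h_1, …, h_N are linearly independent constant vectors. Then in the Jordan normal form of U(z₀), the Jordan blocks corresponding to the eigenvalue λ₀ are exactly N blocks, each of size 2×2. -/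
open Filter Polynomial

lemma charpoly_shift {p : ℕ} (A : Matrix (Fin p) (Fin p) ℂ) (l : ℂ) :
    (A - l • 1).charpoly = (A.charpoly).comp (X + C l) := by
  let f : ℂ[X] →+* ℂ[X] := eval₂RingHom C (X + C l)
  have hmap : Matrix.charmatrix (A - l • 1) = (Matrix.charmatrix A).map f := by
    ext i j
    by_cases hij : i = j
    · subst hij
      simp [Matrix.charmatrix_apply, f, Matrix.one_apply]
      ring
    · simp [Matrix.charmatrix_apply, hij, f, Matrix.one_apply, Matrix.diagonal_apply_ne _ hij]
  have h2 : (f.mapMatrix A.charmatrix).det = f A.charmatrix.det := (RingHom.map_det f _).symm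
  rw [Matrix.charpoly, hmap, show Matrix.map A.charmatrix ⇑f = f.mapMatrix A.charmatrix from rfl,
    h2]
  rfl

lemma ker_pow_le_bound {p : ℕ} (A : Matrix (Fin p) (Fin p) ℂ) (l : ℂ) (k : ℕ) :
    Module.finrank ℂ (LinearMap.ker ((Matrix.toLin' (A - l • 1)) ^ k))
      ≤ (A.charpoly).rootMultiplicity l := by
  set φ : Module.End ℂ (Fin p → ℂ) := Matrix.toLin' (A - l • 1) with hφ
  have hle : LinearMap.ker (φ ^ k) ≤ φ.maxGenEigenspace 0 := by
    intro x hx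
    rw [Module.End.mem_maxGenEigenspace]
    exact ⟨k, by simpa using hx⟩
  have h1 := Submodule.finrank_mono hle
  have h2 : Module.finrank ℂ (φ.maxGenEigenspace 0) = (φ.charpoly).natTrailingDegree :=
    LinearMap.finrank_maxGenEigenspace_zero_eq φ
  have h3 : LinearMap.charpoly φ = (A - l • 1).charpoly := by
    rw [← LinearMap.charpoly_toMatrix (Pi.basisFun ℂ (Fin p)) (f := φ),
      LinearMap.toMatrix_eq_toMatrix', hφ, LinearMap.toMatrix'_toLin']
  rw [h3, charpoly_shift] at h2
  rw [← Polynomial.rootMultiplicity_eq_natTrailingDegree] at h2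
  omega

lemma deriv_fact {p : ℕ} (z₀ lam₀ : ℂ) (U : ℂ → Matrix (Fin p) (Fin p) ℂ)
    (hU : ∀ i j, AnalyticAt ℂ (fun z => U z i j) z₀)
    (Λ : ℂ → ℂ) (cc : ℂ) (G : ℂ → Fin p → ℂ) (hv kv : Fin p → ℂ)
    (hΛ : AnalyticAt ℂ Λ 0 ∧ Λ 0 = lam₀ ∧ deriv Λ 0 = cc)
    (hG : ∀ i, AnalyticAt ℂ (fun w => G w i) 0 ∧ G 0 i = hv i ∧
      deriv (fun w => G w i) 0 = kv i)
    (heig : ∀ᶠ w in nhds (0:ℂ), (U (z₀ + w^2)).mulVec (G w) = Λ w • G w) :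
    (U z₀).mulVec hv = lam₀ • hv ∧ (U z₀).mulVec kv = cc • hv + lam₀ • kv := by
  have hG0 : G 0 = hv := funext fun i => (hG i).2.1
  constructor
  · have e0 := heig.self_of_nhds
    rw [hG0, hΛ.2.1] at e0
    simpa using e0
  · funext i
    have hbj : ∀ j, HasDerivAt (fun w => G w j) (kv j) 0 := fun j => by
      have := (hG j).1.differentiableAt.hasDerivAt
      rwa [(hG j).2.2] at this
    have haj : ∀ j, HasDerivAt (fun w : ℂ => U (z₀ + w^2) i j) 0 0 := fun j => by
      have h1 : HasDerivAt (fun z => U z i j) (deriv (fun z => U z i j) z₀) (z₀ + 0^2) := by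
        simpa using (hU i j).differentiableAt.hasDerivAt
      have h2 : HasDerivAt (fun w : ℂ => z₀ + w^2) ((2:ℕ) * 0^1) 0 :=
        (hasDerivAt_pow 2 (0:ℂ)).const_add z₀
      simpa [Function.comp_def] using h1.comp 0 h2
    have hLsum : HasDerivAt (fun w => ∑ j, U (z₀ + w^2) i j * G w j)
        (∑ j, U z₀ i j * kv j) 0 := by
      have := HasDerivAt.fun_sum (u := Finset.univ)
        (fun j _ => ((haj j).mul (hbj j)))
      simpa using this
    have hR : HasDerivAt (fun w => Λ w * G w i) (cc * hv i + lam₀ * kv i) 0 := by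
      have hΛd : HasDerivAt Λ cc 0 := by
        have := hΛ.1.differentiableAt.hasDerivAt
        rwa [hΛ.2.2] at this
      have := hΛd.mul (hbj i)
      rw [hΛ.2.1, (hG i).2.1] at this
      exact this
    have hee : (fun w => ∑ j, U (z₀ + w^2) i j * G w j) =ᶠ[nhds (0:ℂ)]
        (fun w => Λ w * G w i) := heig.mono fun w hw => by
      have := congrFun hw i
      simpa [Matrix.mulVec, dotProduct] using this
    have key : (∑ j, U z₀ i j * kv j) = cc * hv i + lam₀ * kv i :=
      (hLsum.congr_of_eventuallyEq hee.symm).unique hR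
    simpa [Matrix.mulVec, dotProduct] using key

set_option synthInstance.maxHeartbeats 1000000 in
set_option maxHeartbeats 1000000 in
/-- Eigenvalue-perturbation lemma: under hypotheses (E1)–(E2) (a `λ₀`-group of `2N`
simple eigenvalues forming `N` period-2 cycles with Puiseux expansions
`λ₀ ± c_s w + O(w²)` in `w = (z-z₀)^{1/2}`, eigenvectors `h_s + w k + O(w²)` with
`h_1, …, h_N` linearly independent), the Jordan blocks of `U(z₀)` for `λ₀` are
exactly `N` blocks of size `2 × 2`. -/
theorem stmt4 (p N : ℕ) (z₀ lam₀ : ℂ)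
    (U : ℂ → Matrix (Fin p) (Fin p) ℂ)
    (hU : ∀ i j, AnalyticAt ℂ (fun z => U z i j) z₀)
    (Λp Λm : Fin N → ℂ → ℂ) (c : Fin N → ℂ) (hc : ∀ s, c s ≠ 0)
    (Gp Gm : Fin N → ℂ → (Fin p → ℂ))
    (h kp km : Fin N → (Fin p → ℂ))
    (hΛp : ∀ s, AnalyticAt ℂ (Λp s) 0 ∧ Λp s 0 = lam₀ ∧ deriv (Λp s) 0 = c s)
    (hΛm : ∀ s, AnalyticAt ℂ (Λm s) 0 ∧ Λm s 0 = lam₀ ∧ deriv (Λm s) 0 = -c s)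
    (hGp : ∀ s i, AnalyticAt ℂ (fun w => Gp s w i) 0 ∧ Gp s 0 i = h s i ∧
      deriv (fun w => Gp s w i) 0 = kp s i)
    (hGm : ∀ s i, AnalyticAt ℂ (fun w => Gm s w i) 0 ∧ Gm s 0 i = h s i ∧
      deriv (fun w => Gm s w i) 0 = km s i)
    (heigp : ∀ s, ∀ᶠ w in nhds (0 : ℂ),
      (U (z₀ + w ^ 2)).mulVec (Gp s w) = Λp s w • Gp s w)
    (heigm : ∀ s, ∀ᶠ w in nhds (0 : ℂ),
      (U (z₀ + w ^ 2)).mulVec (Gm s w) = Λm s w • Gm s w)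
    (hind : LinearIndependent ℂ h)
    (hdistinct : ∀ᶠ w in nhdsWithin (0 : ℂ) {(0 : ℂ)}ᶜ,
      Function.Injective (Sum.elim (fun s : Fin N => Λp s w) (fun s : Fin N => Λm s w)))
    (halg : ((U z₀).charpoly).rootMultiplicity lam₀ = 2 * N) :
    Module.finrank ℂ (LinearMap.ker (Matrix.toLin' (U z₀ - lam₀ • 1))) = N ∧
    Module.finrank ℂ (LinearMap.ker ((Matrix.toLin' (U z₀ - lam₀ • 1)) ^ 2)) = 2 * N ∧
    LinearMap.ker ((Matrix.toLin' (U z₀ - lam₀ • 1)) ^ 3)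
      = LinearMap.ker ((Matrix.toLin' (U z₀ - lam₀ • 1)) ^ 2) := by
  set T : Module.End ℂ (Fin p → ℂ) := Matrix.toLin' (U z₀ - lam₀ • 1) with hTdef
  have hfact := fun s => deriv_fact z₀ lam₀ U hU (Λp s) (c s) (Gp s) (h s) (kp s)
    (hΛp s) (hGp s) (heigp s)
  have hTapp : ∀ v, T v = (U z₀).mulVec v - lam₀ • v := by
    intro v
    rw [hTdef, Matrix.toLin'_apply, Matrix.sub_mulVec, Matrix.smul_mulVec,
      Matrix.one_mulVec]
  have hTh : ∀ s, T (h s) = 0 := fun s => by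
    rw [hTapp, (hfact s).1, sub_self]
  have hTk : ∀ s, T (kp s) = c s • h s := fun s => by
    rw [hTapp, (hfact s).2]
    abel
  -- memberships
  have hhK1 : ∀ s, h s ∈ LinearMap.ker T := fun s => LinearMap.mem_ker.mpr (hTh s)
  have hK2 : ∀ s, kp s ∈ LinearMap.ker (T ^ 2) := fun s => by
    rw [LinearMap.mem_ker, pow_two, Module.End.mul_apply, hTk, map_smul, hTh, smul_zero]
  have hhK2 : ∀ s, h s ∈ LinearMap.ker (T ^ 2) := fun s => by
    rw [LinearMap.mem_ker, pow_two, Module.End.mul_apply, hTh, map_zero]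
  have hK12 : LinearMap.ker T ≤ LinearMap.ker (T ^ 2) := fun x hx => by
    rw [LinearMap.mem_ker] at hx ⊢
    rw [pow_two, Module.End.mul_apply, hx, map_zero]
  have hK23 : LinearMap.ker (T ^ 2) ≤ LinearMap.ker (T ^ 3) := fun x hx => by
    rw [LinearMap.mem_ker] at hx ⊢
    rw [show (3:ℕ) = 2 + 1 from rfl, pow_succ', Module.End.mul_apply, hx, map_zero]
  -- upper bounds from algebraic multiplicity
  have hb2 : Module.finrank ℂ (LinearMap.ker (T ^ 2)) ≤ 2 * N :=
    halg ▸ ker_pow_le_bound (U z₀) lam₀ 2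
  have hb3 : Module.finrank ℂ (LinearMap.ker (T ^ 3)) ≤ 2 * N :=
    halg ▸ ker_pow_le_bound (U z₀) lam₀ 3
  -- combined linear independence
  have hcomb : LinearIndependent ℂ (Sum.elim h kp) := by
    rw [Fintype.linearIndependent_iff]
    intro g hg
    have hg' : ∑ s, g (Sum.inl s) • h s + ∑ s, g (Sum.inr s) • kp s = 0 := by
      simpa [Fintype.sum_sum_type] using hg
    have h1 : ∑ s, (g (Sum.inr s) * c s) • h s = 0 := by
      have := congrArg T hg'
      simpa [map_add, map_sum, map_smul, hTh, hTk, smul_smul] using this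
    have hr : ∀ s, g (Sum.inr s) = 0 := fun s =>
      (mul_eq_zero.mp (Fintype.linearIndependent_iff.mp hind _ h1 s)).resolve_right (hc s)
    have h2 : ∑ s, g (Sum.inl s) • h s = 0 := by
      simpa [hr] using hg'
    have hl := Fintype.linearIndependent_iff.mp hind _ h2
    rintro (s | s)
    exacts [hl s, hr s]
  -- finrank K2 = 2N
  have hfr2 : Module.finrank ℂ (LinearMap.ker (T ^ 2)) = 2 * N := by
    refine le_antisymm hb2 ?_
    have hmem : ∀ i : Fin N ⊕ Fin N, Sum.elim h kp i ∈ LinearMap.ker (T ^ 2) := by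
      rintro (s | s)
      exacts [hhK2 s, hK2 s]
    have hli : LinearIndependent ℂ (fun i : Fin N ⊕ Fin N =>
        (⟨Sum.elim h kp i, hmem i⟩ : LinearMap.ker (T ^ 2))) := by
      apply LinearIndependent.of_comp (LinearMap.ker (T ^ 2)).subtype
      convert hcomb
      rfl
    have := hli.fintype_card_le_finrank
    simpa [two_mul] using this
  -- finrank K1 = N via rank-nullity for T restricted to K2
  have hfr1 : Module.finrank ℂ (LinearMap.ker T) = N := by
    have hlow : N ≤ Module.finrank ℂ (LinearMap.ker T) := by
      have hli : LinearIndependent ℂ (fun s : Fin N =>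
          (⟨h s, hhK1 s⟩ : LinearMap.ker T)) := by
        apply LinearIndependent.of_comp (LinearMap.ker T).subtype
        convert hind
        rfl
      simpa using hli.fintype_card_le_finrank
    set S : LinearMap.ker (T ^ 2) →ₗ[ℂ] (Fin p → ℂ) :=
      T ∘ₗ (LinearMap.ker (T ^ 2)).subtype with hS
    have hrn := LinearMap.finrank_range_add_finrank_ker S
    have hkerS : Module.finrank ℂ (LinearMap.ker S) = Module.finrank ℂ (LinearMap.ker T) := by
      have : LinearMap.ker S = Submodule.comap (LinearMap.ker (T ^ 2)).subtype
          (LinearMap.ker T) := by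
        rw [hS, LinearMap.ker_comp]
      rw [this]
      exact (Submodule.comapSubtypeEquivOfLe hK12).finrank_eq
    have hrange : N ≤ Module.finrank ℂ (LinearMap.range S) := by
      have hmemr : ∀ s, h s ∈ LinearMap.range S := fun s => by
        refine ⟨⟨(c s)⁻¹ • kp s, Submodule.smul_mem _ _ (hK2 s)⟩, ?_⟩
        show T ((c s)⁻¹ • kp s) = h s
        rw [map_smul, hTk, smul_smul, inv_mul_cancel₀ (hc s), one_smul]
      have hli : LinearIndependent ℂ (fun s : Fin N =>
          (⟨h s, hmemr s⟩ : LinearMap.range S)) := by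
        apply LinearIndependent.of_comp (LinearMap.range S).subtype
        convert hind
        rfl
      simpa using hli.fintype_card_le_finrank
    rw [hfr2] at hrn
    omega
  refine ⟨hfr1, hfr2, ?_⟩
  exact (Submodule.eq_of_le_of_finrank_le hK23 (by omega)).symm
end

section
/- Under hypotheses (E1)–(E2) of the preceding eigenvalue perturbation setup, for each s the vector (k_{2s} − k_{2s+1})/(2 c_s) is a generalized eigenvector: U(z₀)·((k_{2s} − k_{2s+1})/(2c_s)) = h_s + λ₀·((k_{2s} − k_{2s+1})/(2c_s)), and in particular k_{2s} ≠ k_{2s+1}. -/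
open Filter

lemma stmt5_aux (p : ℕ) (z₀ lam₀ d : ℂ)
    (U : ℂ → Matrix (Fin p) (Fin p) ℂ)
    (hU : ∀ i j, AnalyticAt ℂ (fun z => U z i j) z₀)
    (l : ℂ → ℂ) (g : ℂ → Fin p → ℂ) (h k : Fin p → ℂ)
    (hl : AnalyticAt ℂ l 0 ∧ l 0 = lam₀ ∧ deriv l 0 = d)
    (hg : ∀ i, AnalyticAt ℂ (fun w => g w i) 0 ∧ g 0 i = h i ∧
      deriv (fun w => g w i) 0 = k i)
    (he : ∀ᶠ w in nhds (0 : ℂ), (U (z₀ + w ^ 2)).mulVec (g w) = l w • g w) :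
    ∀ i, ∑ j, U z₀ i j * k j = d * h i + lam₀ * k i := by
  intro i
  have hq : HasDerivAt (fun w : ℂ => z₀ + w ^ 2) 0 0 := by
    have := (hasDerivAt_pow 2 (0 : ℂ)).const_add z₀
    simpa using this
  have hF : ∀ j, HasDerivAt (fun w : ℂ => U (z₀ + w ^ 2) i j) 0 0 := by
    intro j
    have h1 : HasDerivAt (fun z => U z i j) (deriv (fun z => U z i j) z₀)
        ((fun w : ℂ => z₀ + w ^ 2) 0) := by
      simpa using (hU i j).differentiableAt.hasDerivAt
    have := h1.comp 0 hq
    simpa [Function.comp_def] using this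
  have hG : ∀ j, HasDerivAt (fun w => g w j) (k j) 0 := by
    intro j
    have := (hg j).1.differentiableAt.hasDerivAt
    rwa [(hg j).2.2] at this
  have hl' : HasDerivAt l d 0 := by
    have := hl.1.differentiableAt.hasDerivAt
    rwa [hl.2.2] at this
  have hL : HasDerivAt (fun w : ℂ => ∑ j, U (z₀ + w ^ 2) i j * g w j)
      (∑ j, (0 * g 0 j + U (z₀ + 0 ^ 2) i j * k j)) 0 :=
    HasDerivAt.fun_sum (fun j _ => (hF j).mul (hG j))
  have hR : HasDerivAt (fun w : ℂ => l w * g w i)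
      (d * g 0 i + l 0 * k i) 0 := hl'.mul (hG i)
  have heq : (fun w : ℂ => ∑ j, U (z₀ + w ^ 2) i j * g w j)
      =ᶠ[nhds (0 : ℂ)] fun w => l w * g w i := by
    filter_upwards [he] with w hw
    have := congrFun hw i
    simpa [Matrix.mulVec, dotProduct] using this
  have hL' : HasDerivAt (fun w : ℂ => ∑ j, U (z₀ + w ^ 2) i j * g w j)
      (d * g 0 i + l 0 * k i) 0 := hR.congr_of_eventuallyEq heq
  have huniq := hL.unique hL'
  have hsum : ∑ j, U z₀ i j * k j = d * g 0 i + l 0 * k i := by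
    rw [← huniq]
    simp
  rw [hsum, (hg i).2.1, hl.2.1]

/-- In the perturbation setup, `(k_{2s} - k_{2s+1})/(2c_s)` is a generalized eigenvector:
`U(z₀)·v = h + λ₀·v` where `v = (k₁ - k₂)/(2c)`, and in particular `k₁ ≠ k₂`. -/
theorem stmt5 (p : ℕ) (z₀ lam₀ c : ℂ) (hc : c ≠ 0)
    (U : ℂ → Matrix (Fin p) (Fin p) ℂ)
    (hU : ∀ i j, AnalyticAt ℂ (fun z => U z i j) z₀)
    (lp lm : ℂ → ℂ) (g1 g2 : ℂ → Fin p → ℂ) (h k1 k2 : Fin p → ℂ) (hh : h ≠ 0)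
    (hlp : AnalyticAt ℂ lp 0 ∧ lp 0 = lam₀ ∧ deriv lp 0 = c)
    (hlm : AnalyticAt ℂ lm 0 ∧ lm 0 = lam₀ ∧ deriv lm 0 = -c)
    (hg1 : ∀ i, AnalyticAt ℂ (fun w => g1 w i) 0 ∧ g1 0 i = h i ∧
      deriv (fun w => g1 w i) 0 = k1 i)
    (hg2 : ∀ i, AnalyticAt ℂ (fun w => g2 w i) 0 ∧ g2 0 i = h i ∧
      deriv (fun w => g2 w i) 0 = k2 i)
    (he1 : ∀ᶠ w in nhds (0 : ℂ), (U (z₀ + w ^ 2)).mulVec (g1 w) = lp w • g1 w)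
    (he2 : ∀ᶠ w in nhds (0 : ℂ), (U (z₀ + w ^ 2)).mulVec (g2 w) = lm w • g2 w) :
    (U z₀).mulVec ((2 * c)⁻¹ • (k1 - k2)) = h + lam₀ • ((2 * c)⁻¹ • (k1 - k2)) ∧
      k1 ≠ k2 := by
  have A1 := stmt5_aux p z₀ lam₀ c U hU lp g1 h k1 hlp hg1 he1
  have A2 := stmt5_aux p z₀ lam₀ (-c) U hU lm g2 h k2 hlm hg2 he2
  constructor
  · funext i
    have e1 := A1 i
    have e2 := A2 i
    have key : ∑ j, U z₀ i j * (k1 j - k2 j)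
        = 2 * c * h i + lam₀ * (k1 i - k2 i) := by
      have : ∑ j, U z₀ i j * (k1 j - k2 j)
          = (∑ j, U z₀ i j * k1 j) - ∑ j, U z₀ i j * k2 j := by
        rw [← Finset.sum_sub_distrib]
        congr 1; funext j; ring
      rw [this, e1, e2]; ring
    have h2c : (2 * c) ≠ 0 := by
      simp [hc]
    simp only [Matrix.mulVec, dotProduct, Pi.smul_apply, Pi.add_apply,
      Pi.sub_apply, smul_eq_mul]
    have : ∑ j, U z₀ i j * ((2 * c)⁻¹ * (k1 j - k2 j))
        = (2 * c)⁻¹ * ∑ j, U z₀ i j * (k1 j - k2 j) := by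
      rw [Finset.mul_sum]
      congr 1; funext j; ring
    rw [this, key]
    field_simp
  · intro hk
    apply hh
    funext i
    have e1 := A1 i
    have e2 := A2 i
    rw [hk] at e1
    rw [e2] at e1
    have : 2 * c * h i = 0 := by linear_combination -e1
    have := mul_eq_zero.mp this
    rcases this with h0 | h0
    · exact absurd h0 (by simp [hc])
    · simpa using h0
end

section
/- Let u(z) be a p×p matrix-valued function analytic at z₀ with det u not identically zero, and suppose z₀ is a zero of det u of order k > 0. Then dim ker u(z₀) = k if and only if u(z)^{-1} has a pole of order exactly 1 at z₀. In that case, ker(Res_{z=z₀} u(z)^{-1}) = Ran u(z₀) and Ran(Res_{z=z₀} u(z)^{-1}) = ker u(z₀). -/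
open Filter Matrix Topology

namespace Stmt6Aux

variable {p : ℕ}

/-- diagonal idempotent with 1's in first `p-n` slots -/
noncomputable def dE (p n : ℕ) : Matrix (Fin p) (Fin p) ℂ :=
  Matrix.diagonal fun i => if (i : ℕ) < p - n then 1 else 0

/-- diagonal idempotent with 1's in last `n` slots -/
noncomputable def dF (p n : ℕ) : Matrix (Fin p) (Fin p) ℂ :=
  Matrix.diagonal fun i => if (i : ℕ) < p - n then 0 else 1

lemma dE_add_dF (n : ℕ) : dE p n + dF p n = 1 := by
  ext i j
  by_cases h : (i : ℕ) < p - n <;>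
    simp [dE, dF, Matrix.diagonal_apply, Matrix.one_apply, h]

lemma dE_mul_dF (n : ℕ) : dE p n * dF p n = 0 := by
  ext i j
  by_cases h : (i : ℕ) < p - n <;>
    simp [dE, dF, Matrix.diagonal_mul_diagonal, Matrix.diagonal_apply, h] <;>
      (intro h2; first
        | (rintro rfl; omega)
        | (rw [if_neg (by rintro rfl; omega)]))

lemma dF_mul_dE (n : ℕ) : dF p n * dE p n = 0 := by
  ext i j
  by_cases h : (i : ℕ) < p - n <;>
    simp [dE, dF, Matrix.diagonal_mul_diagonal, Matrix.diagonal_apply, h] <;>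
      (intro h2; first
        | (rintro rfl; omega)
        | (rw [if_neg (by rintro rfl; omega)]))

lemma dE_mul_dE (n : ℕ) : dE p n * dE p n = dE p n := by
  ext i j
  by_cases h : (i : ℕ) < p - n <;>
    simp [dE, Matrix.diagonal_mul_diagonal, Matrix.diagonal_apply, h] <;>
      (intro h2; first
        | (rintro rfl; omega)
        | (rw [if_neg (by rintro rfl; omega)]))

lemma dF_mul_dF (n : ℕ) : dF p n * dF p n = dF p n := by
  ext i j
  by_cases h : (i : ℕ) < p - n <;>
    simp [dF, Matrix.diagonal_mul_diagonal, Matrix.diagonal_apply, h] <;>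
      (intro h2; first
        | (rintro rfl; omega)
        | (rw [if_neg (by rintro rfl; omega)]))

lemma det_dE_add_smul_dF {n : ℕ} (hn : n ≤ p) (c : ℂ) :
    (dE p n + c • dF p n).det = c ^ n := by
  have h : dE p n + c • dF p n =
      Matrix.diagonal (fun i : Fin p => if (i : ℕ) < p - n then 1 else c) := by
    ext i j
    by_cases h : (i : ℕ) < p - n <;>
      simp [dE, dF, Matrix.diagonal_apply, h]
  rw [h, Matrix.det_diagonal]
  have hpn : (p - n) + n = p := Nat.sub_add_cancel hn
  calc ∏ i : Fin p, (if (i : ℕ) < p - n then (1:ℂ) else c)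
      = ∏ i : Fin ((p - n) + n), (if (i : ℕ) < p - n then (1:ℂ) else c) := by
        exact (Fintype.prod_equiv (finCongr hpn) _ _ (fun i => by simp)).symm
    _ = c ^ n := by
        rw [← finSumFinEquiv.prod_comp]
        rw [Fintype.prod_sum_type]
        simp [finSumFinEquiv_apply_left, finSumFinEquiv_apply_right]

lemma dE_add_smul_dF_mul_inv {n : ℕ} {c : ℂ} (hc : c ≠ 0) :
    (dE p n + c • dF p n) * (dE p n + c⁻¹ • dF p n) = 1 := by
  rw [add_mul, mul_add, mul_add, smul_mul_assoc, smul_mul_assoc, mul_smul_comm, mul_smul_comm,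
    dE_mul_dE, dE_mul_dF, dF_mul_dE, dF_mul_dF, smul_zero, smul_zero, add_zero, zero_add,
    smul_smul, mul_inv_cancel₀ hc, one_smul, dE_add_dF]


lemma exists_Q (A : Matrix (Fin p) (Fin p) ℂ) {n : ℕ}
    (hn : Module.finrank ℂ (LinearMap.ker (Matrix.toLin' A)) = n) :
    ∃ Q : Matrix (Fin p) (Fin p) ℂ, IsUnit Q.det ∧
      (∀ j : Fin p, p - n ≤ (j : ℕ) → A.mulVec (fun i => Q i j) = 0) ∧
      LinearMap.ker (Matrix.toLin' A) ≤
        LinearMap.range (Matrix.toLin' (Q * dF p n)) := by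
  classical
  set K := LinearMap.ker (Matrix.toLin' A) with hK
  have hnp : n ≤ p := by
    rw [← hn]
    calc Module.finrank ℂ K ≤ Module.finrank ℂ (Fin p → ℂ) := Submodule.finrank_le K
      _ = p := by simp
  obtain ⟨W, hWK⟩ := Submodule.exists_isCompl K
  have htot : Module.finrank ℂ (Fin p → ℂ) = p := by simp
  have hrank : Module.finrank ℂ W = p - n := by
    have h2 := Submodule.finrank_add_eq_of_isCompl hWK
    omega
  let bW : Module.Basis (Fin (p - n)) ℂ W := Module.finBasisOfFinrankEq ℂ W hrank
  let bK : Module.Basis (Fin n) ℂ K := Module.finBasisOfFinrankEq ℂ K hn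
  have hpn : (p - n) + n = p := Nat.sub_add_cancel hnp
  let e : (W × K) ≃ₗ[ℂ] (Fin p → ℂ) := Submodule.prodEquivOfIsCompl W K hWK.symm
  let r : (Fin (p - n) ⊕ Fin n) ≃ Fin p := finSumFinEquiv.trans (finCongr hpn)
  let b : Module.Basis (Fin p) ℂ (Fin p → ℂ) := ((bW.prod bK).map e).reindex r
  let Q : Matrix (Fin p) (Fin p) ℂ := (Pi.basisFun ℂ (Fin p)).toMatrix b
  have hQcolv : ∀ j : Fin p, (fun i => Q i j) = b j := by
    intro j; funext i
    simp [Q, Module.Basis.toMatrix_apply, Pi.basisFun_repr]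
  have hb_inr : ∀ i : Fin n, b (r (Sum.inr i)) = (bK i : Fin p → ℂ) := by
    intro i
    simp only [b, Module.Basis.reindex_apply, Equiv.symm_apply_apply, Module.Basis.map_apply]
    have h0 : (bW.prod bK) (Sum.inr i) = ((0 : W), bK i) :=
      Prod.ext (Module.Basis.prod_apply_inr_fst bW bK i) (Module.Basis.prod_apply_inr_snd bW bK i)
    rw [h0]
    show ((0 : W) : Fin p → ℂ) + ((bK i : K) : Fin p → ℂ) = (bK i : Fin p → ℂ)
    simp
  have hr_val : ∀ i : Fin n, ((r (Sum.inr i)) : ℕ) = (p - n) + i := by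
    intro i; simp [r, finSumFinEquiv_apply_right]
  have hQunit : IsUnit Q.det := by
    have : Invertible Q := (Pi.basisFun ℂ (Fin p)).invertibleToMatrix b
    exact (isUnit_of_invertible Q).map Matrix.detMonoidHom
  refine ⟨Q, hQunit, ?_, ?_⟩
  · intro j hj
    have hlt : (j : ℕ) - (p - n) < n := by omega
    have hjeq : j = r (Sum.inr ⟨(j : ℕ) - (p - n), hlt⟩) := by
      apply Fin.ext
      rw [hr_val]
      simp; omega
    rw [hQcolv, hjeq, hb_inr]
    have hmem : Matrix.toLin' A ↑(bK ⟨(j : ℕ) - (p - n), hlt⟩) = 0 :=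
      (bK ⟨(j : ℕ) - (p - n), hlt⟩).2
    rwa [Matrix.toLin'_apply] at hmem
  · intro x hx
    have hcol : ∀ i : Fin n, (bK i : Fin p → ℂ) ∈
        LinearMap.range (Matrix.toLin' (Q * dF p n)) := by
      intro i
      refine ⟨Pi.single (r (Sum.inr i)) 1, ?_⟩
      have h1 : (dF p n) *ᵥ (Pi.single (r (Sum.inr i)) 1) =
          Pi.single (r (Sum.inr i)) 1 := by
        rw [dF, Matrix.diagonal_mulVec_single]
        rw [if_neg (by rw [hr_val]; omega), one_mul]
      rw [Matrix.toLin'_apply, ← Matrix.mulVec_mulVec, h1, Matrix.mulVec_single_one,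
        ← hb_inr i, ← hQcolv]
      rfl
    have hsum := bK.sum_repr ⟨x, hx⟩
    have h2 : K.subtype (∑ i, bK.repr ⟨x, hx⟩ i • bK i) = K.subtype ⟨x, hx⟩ :=
      congrArg _ hsum
    rw [map_sum] at h2
    simp only [_root_.map_smul, Submodule.subtype_apply] at h2
    exact h2 ▸ Submodule.sum_mem _ fun i _ => Submodule.smul_mem _ _ (hcol i)


lemma analyticAt_dslope' {f : ℂ → ℂ} {z₀ : ℂ} (hf : AnalyticAt ℂ f z₀) :
    AnalyticAt ℂ (dslope f z₀) z₀ := by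
  obtain ⟨q, hq⟩ := hf
  exact ⟨_, hq.has_fpower_series_dslope_fslope⟩

variable {X : Type*} [TopologicalSpace X]

lemma continuousAt_matrix {f : X → Matrix (Fin p) (Fin p) ℂ} {x : X}
    (h : ∀ i j, ContinuousAt (fun z => f z i j) x) : ContinuousAt f x :=
  continuousAt_pi.2 fun i => continuousAt_pi.2 fun j => h i j

lemma tendsto_matrix {α : Type*} {l : Filter α} {f : α → Matrix (Fin p) (Fin p) ℂ}
    {A : Matrix (Fin p) (Fin p) ℂ} (h : ∀ i j, Tendsto (fun x => f x i j) l (nhds (A i j))) :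
    Tendsto f l (nhds A) :=
  tendsto_pi_nhds.2 fun i => tendsto_pi_nhds.2 fun j => h i j

lemma tendsto_entry {α : Type*} {l : Filter α} {f : α → Matrix (Fin p) (Fin p) ℂ}
    {A : Matrix (Fin p) (Fin p) ℂ} (h : Tendsto f l (nhds A)) (i j : Fin p) :
    Tendsto (fun x => f x i j) l (nhds (A i j)) :=
  (tendsto_pi_nhds.1 (tendsto_pi_nhds.1 h i) j)

lemma tendstoMatMul {α : Type*} {l : Filter α} {f g : α → Matrix (Fin p) (Fin p) ℂ}
    {A B : Matrix (Fin p) (Fin p) ℂ} (hf : Tendsto f l (nhds A))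
    (hg : Tendsto g l (nhds B)) :
    Tendsto (fun x => f x * g x) l (nhds (A * B)) := by
  apply tendsto_matrix
  intro i j
  simp only [Matrix.mul_apply]
  exact tendsto_finset_sum _ fun c _ => (tendsto_entry hf i c).mul (tendsto_entry hg c j)

lemma tendstoMatVec {α : Type*} {l : Filter α} {f : α → Matrix (Fin p) (Fin p) ℂ}
    {g : α → Fin p → ℂ} {A : Matrix (Fin p) (Fin p) ℂ} {y : Fin p → ℂ}
    (hf : Tendsto f l (nhds A)) (hg : Tendsto g l (nhds y)) :
    Tendsto (fun x => f x *ᵥ g x) l (nhds (A *ᵥ y)) := by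
  apply tendsto_pi_nhds.2
  intro i
  simp only [Matrix.mulVec, dotProduct]
  exact tendsto_finset_sum _ fun c _ =>
    (tendsto_entry hf i c).mul (tendsto_pi_nhds.1 hg c)

lemma contAtMatMul {f g : X → Matrix (Fin p) (Fin p) ℂ} {x : X}
    (hf : ContinuousAt f x) (hg : ContinuousAt g x) :
    ContinuousAt (fun z => f z * g z) x :=
  tendstoMatMul hf hg

lemma contAtMatDet {f : X → Matrix (Fin p) (Fin p) ℂ} {x : X}
    (hf : ContinuousAt f x) : ContinuousAt (fun z => (f z).det) x := by
  have h1 : Continuous (Matrix.det : Matrix (Fin p) (Fin p) ℂ → ℂ) :=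
    Continuous.matrix_det continuous_id
  exact h1.continuousAt.comp hf

lemma contAtMatInv {f : X → Matrix (Fin p) (Fin p) ℂ} {x : X}
    (hf : ContinuousAt f x) (h : (f x).det ≠ 0) :
    ContinuousAt (fun z => (f z)⁻¹) x := by
  refine ContinuousAt.comp ?_ hf
  apply continuousAt_matrix_inv
  rw [Ring.inverse_eq_inv']
  exact continuousAt_inv₀ h

end Stmt6Aux

open Stmt6Aux in
/-- If `u` is analytic at `z₀` with `det u` having a zero of order `k > 0` there, then
`dim ker u(z₀) = k` iff `u⁻¹` has a simple pole at `z₀`; and in that case the residue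
`L = lim (z-z₀)u(z)⁻¹` satisfies `ker L = Ran u(z₀)` and `Ran L = ker u(z₀)`. -/
theorem stmt6 (p k : ℕ) (hk : 0 < k) (z₀ : ℂ)
    (u : ℂ → Matrix (Fin p) (Fin p) ℂ)
    (hu : ∀ i j, AnalyticAt ℂ (fun z => u z i j) z₀)
    (d : ℂ → ℂ) (hd : AnalyticAt ℂ d z₀) (hd0 : d z₀ ≠ 0)
    (hdet : ∀ᶠ z in nhds z₀, (u z).det = (z - z₀) ^ k * d z) :
    (Module.finrank ℂ (LinearMap.ker (Matrix.toLin' (u z₀))) = k ↔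
      ∃ L : Matrix (Fin p) (Fin p) ℂ, L ≠ 0 ∧
        Tendsto (fun z => (z - z₀) • (u z)⁻¹) (nhdsWithin z₀ {z₀}ᶜ) (nhds L)) ∧
    (Module.finrank ℂ (LinearMap.ker (Matrix.toLin' (u z₀))) = k →
      ∀ L : Matrix (Fin p) (Fin p) ℂ,
        Tendsto (fun z => (z - z₀) • (u z)⁻¹) (nhdsWithin z₀ {z₀}ᶜ) (nhds L) →
        LinearMap.ker (Matrix.toLin' L) = LinearMap.range (Matrix.toLin' (u z₀)) ∧
        LinearMap.range (Matrix.toLin' L) = LinearMap.ker (Matrix.toLin' (u z₀))) := by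
  classical
  set n := Module.finrank ℂ (LinearMap.ker (Matrix.toLin' (u z₀))) with hn
  -- the analytic "difference quotient" matrix
  set v : ℂ → Matrix (Fin p) (Fin p) ℂ :=
    fun z => Matrix.of fun i j => dslope (fun ζ => u ζ i j) z₀ z with hvdef
  have hv_an : ∀ i j, AnalyticAt ℂ (fun z => v z i j) z₀ :=
    fun i j => analyticAt_dslope' (hu i j)
  have hv_cont : ContinuousAt v z₀ := continuousAt_matrix fun i j => (hv_an i j).continuousAt
  have hu_cont : ContinuousAt u z₀ := continuousAt_matrix fun i j => (hu i j).continuousAt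
  have huv : ∀ z, u z = u z₀ + (z - z₀) • v z := by
    intro z; ext i j
    have h := sub_smul_dslope (fun ζ => u ζ i j) z₀ z
    simp only [smul_eq_mul] at h
    simp only [Matrix.add_apply, Matrix.smul_apply, smul_eq_mul, hvdef, Matrix.of_apply]
    linear_combination -h
  have hnp : n ≤ p := by
    rw [hn]
    calc Module.finrank ℂ (LinearMap.ker (Matrix.toLin' (u z₀)))
        ≤ Module.finrank ℂ (Fin p → ℂ) := Submodule.finrank_le _
      _ = p := by simp
  obtain ⟨Q, hQu, hQcol, hQrange⟩ := exists_Q (u z₀) hn.symm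
  have hAQF : u z₀ * Q * dF p n = 0 := by
    have h4 : ∀ j : Fin p, p - n ≤ (j : ℕ) → ∀ i, (u z₀ * Q) i j = 0 := by
      intro j hj i
      have h5 := congrFun (hQcol j hj) i
      simpa [Matrix.mul_apply, Matrix.mulVec, dotProduct] using h5
    ext i j
    by_cases hj : (j : ℕ) < p - n
    · simp [dF, Matrix.mul_diagonal, hj]
    · simp [dF, Matrix.mul_diagonal, hj, h4 j (by omega) i]
  set D : ℂ → Matrix (Fin p) (Fin p) ℂ := fun z => dE p n + (z - z₀) • dF p n with hDdef
  set w : ℂ → Matrix (Fin p) (Fin p) ℂ :=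
    fun z => u z * Q * dE p n + v z * Q * dF p n with hwdef
  have habc : ∀ (a b : Matrix (Fin p) (Fin p) ℂ) (c : ℂ),
      (a * dE p n + b * dF p n) * (dE p n + c • dF p n) = a * dE p n + c • (b * dF p n) := by
    intro a b c
    rw [add_mul, mul_add, mul_add, mul_smul_comm, mul_smul_comm,
      mul_assoc, mul_assoc, mul_assoc, mul_assoc, dE_mul_dE, dE_mul_dF, dF_mul_dE, dF_mul_dF,
      mul_zero, mul_zero, smul_zero, add_zero, zero_add]
  have hkey : ∀ z, u z * Q = w z * D z := by
    intro z
    have h1 : u z * Q * dF p n = (z - z₀) • (v z * Q * dF p n) := by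
      conv_lhs => rw [huv z]
      rw [add_mul, add_mul, hAQF, zero_add, smul_mul_assoc, smul_mul_assoc]
    calc u z * Q = u z * Q * (dE p n + dF p n) := by rw [dE_add_dF, mul_one]
      _ = u z * Q * dE p n + (z - z₀) • (v z * Q * dF p n) := by rw [mul_add, h1]
      _ = w z * D z := (habc _ _ _).symm
  have hw_cont : ContinuousAt w z₀ :=
    (contAtMatMul (contAtMatMul hu_cont continuousAt_const) continuousAt_const).add
      (contAtMatMul (contAtMatMul hv_cont continuousAt_const) continuousAt_const)
  have hdetw : ∀ᶠ z in nhds z₀, (z - z₀) ^ k * d z * Q.det = (w z).det * (z - z₀) ^ n := by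
    filter_upwards [hdet] with z hz
    have h1 : (u z * Q).det = (w z * D z).det := by rw [hkey]
    rw [Matrix.det_mul, Matrix.det_mul, hz, hDdef] at h1
    rw [h1, det_dE_add_smul_dF hnp]
  have hz_ne : ∀ᶠ z in nhdsWithin z₀ {z₀}ᶜ, z ≠ z₀ := by
    filter_upwards [eventually_mem_nhdsWithin] with z hz
    exact hz
  have hd_ne : ∀ᶠ z in nhds z₀, d z ≠ 0 := hd.continuousAt.eventually_ne hd0
  have huunit : ∀ᶠ z in nhdsWithin z₀ {z₀}ᶜ, IsUnit (u z).det := by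
    filter_upwards [hdet.filter_mono nhdsWithin_le_nhds,
      hd_ne.filter_mono nhdsWithin_le_nhds, hz_ne] with z h1 h2 h3
    rw [h1]
    exact isUnit_iff_ne_zero.2 (mul_ne_zero (pow_ne_zero _ (sub_ne_zero.2 h3)) h2)
  have hsub0 : Tendsto (fun z => z - z₀) (nhdsWithin z₀ {z₀}ᶜ) (nhds 0) := by
    have h1 : Tendsto (fun z : ℂ => z - z₀) (nhds z₀) (nhds (z₀ - z₀)) :=
      ((continuous_id.sub continuous_const).tendsto z₀)
    rw [sub_self] at h1
    exact h1.mono_left nhdsWithin_le_nhds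
  have hdQ : d z₀ * Q.det ≠ 0 := mul_ne_zero hd0 hQu.ne_zero
  have tdQ : Tendsto (fun z => d z * Q.det) (nhdsWithin z₀ {z₀}ᶜ) (nhds (d z₀ * Q.det)) :=
    ((hd.continuousAt.mul continuousAt_const).tendsto).mono_left nhdsWithin_le_nhds
  have tdetw : Tendsto (fun z => (w z).det) (nhdsWithin z₀ {z₀}ᶜ) (nhds ((w z₀).det)) :=
    (contAtMatDet hw_cont).tendsto.mono_left nhdsWithin_le_nhds
  have hnk : n ≤ k := by
    by_contra hlt
    push_neg at hlt
    have he : ∀ᶠ z in nhdsWithin z₀ {z₀}ᶜ, d z * Q.det = (w z).det * (z - z₀) ^ (n - k) := by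
      filter_upwards [hdetw.filter_mono nhdsWithin_le_nhds, hz_ne] with z h1 h2
      have hzz : (z - z₀) ≠ 0 := sub_ne_zero.2 h2
      have hpow : (z - z₀) ^ k * (z - z₀) ^ (n - k) = (z - z₀) ^ n := by
        rw [← pow_add]; congr 1; omega
      have h3 : (z - z₀) ^ k * (d z * Q.det)
          = (z - z₀) ^ k * ((w z).det * (z - z₀) ^ (n - k)) := by
        calc (z - z₀) ^ k * (d z * Q.det) = (z - z₀) ^ k * d z * Q.det := by ring
          _ = (w z).det * (z - z₀) ^ n := h1
          _ = (z - z₀) ^ k * ((w z).det * (z - z₀) ^ (n - k)) := by rw [← hpow]; ring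
      exact mul_left_cancel₀ (pow_ne_zero _ hzz) h3
    have t2 : Tendsto (fun z => (w z).det * (z - z₀) ^ (n - k))
        (nhdsWithin z₀ {z₀}ᶜ) (nhds ((w z₀).det * 0)) := by
      refine tdetw.mul ?_
      have h0 : (0 : ℂ) ^ (n - k) = 0 := zero_pow (by omega)
      have := hsub0.pow (n - k)
      rwa [h0] at this
    have := tendsto_nhds_unique (Tendsto.congr' he tdQ) t2
    rw [mul_zero] at this
    exact hdQ this
  have hvz : Tendsto v (nhdsWithin z₀ {z₀}ᶜ) (nhds (v z₀)) :=
    hv_cont.tendsto.mono_left nhdsWithin_le_nhds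
  have main2 : ∀ L : Matrix (Fin p) (Fin p) ℂ,
      Tendsto (fun z => (z - z₀) • (u z)⁻¹) (nhdsWithin z₀ {z₀}ᶜ) (nhds L) →
      LinearMap.ker (Matrix.toLin' L) = LinearMap.range (Matrix.toLin' (u z₀)) ∧
      LinearMap.range (Matrix.toLin' L) = LinearMap.ker (Matrix.toLin' (u z₀)) := by
    intro L hL
    have hLu : L * u z₀ = 0 := by
      have e1 : ∀ᶠ z in nhdsWithin z₀ {z₀}ᶜ,
          ((z - z₀) • (u z)⁻¹) * u z₀
            = (z - z₀) • (1 : Matrix (Fin p) (Fin p) ℂ)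
              - (z - z₀) • (((z - z₀) • (u z)⁻¹) * v z) := by
        filter_upwards [huunit] with z hz
        have hinv : (u z)⁻¹ * u z = 1 := Matrix.nonsing_inv_mul _ hz
        have h3 : u z₀ = u z - (z - z₀) • v z := by rw [huv z, add_sub_cancel_right]
        rw [h3, mul_sub, smul_mul_assoc, hinv, mul_smul_comm]
      have t1 : Tendsto (fun z => ((z - z₀) • (u z)⁻¹) * u z₀)
          (nhdsWithin z₀ {z₀}ᶜ) (nhds (L * u z₀)) := tendstoMatMul hL tendsto_const_nhds
      have t2 : Tendsto (fun z => (z - z₀) • (1 : Matrix (Fin p) (Fin p) ℂ)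
            - (z - z₀) • (((z - z₀) • (u z)⁻¹) * v z))
          (nhdsWithin z₀ {z₀}ᶜ)
          (nhds ((0:ℂ) • (1 : Matrix (Fin p) (Fin p) ℂ) - (0:ℂ) • (L * v z₀))) :=
        (hsub0.smul tendsto_const_nhds).sub (hsub0.smul (tendstoMatMul hL hvz))
      have := tendsto_nhds_unique (Tendsto.congr' e1 t1) t2
      rw [zero_smul, zero_smul, sub_zero] at this
      exact this
    have huL : u z₀ * L = 0 := by
      have e1 : ∀ᶠ z in nhdsWithin z₀ {z₀}ᶜ,
          u z₀ * ((z - z₀) • (u z)⁻¹)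
            = (z - z₀) • (1 : Matrix (Fin p) (Fin p) ℂ)
              - (z - z₀) • (v z * ((z - z₀) • (u z)⁻¹)) := by
        filter_upwards [huunit] with z hz
        have hinv : u z * (u z)⁻¹ = 1 := Matrix.mul_nonsing_inv _ hz
        have h3 : u z₀ = u z - (z - z₀) • v z := by rw [huv z, add_sub_cancel_right]
        rw [h3, sub_mul, mul_smul_comm, hinv, smul_mul_assoc]
      have t1 : Tendsto (fun z => u z₀ * ((z - z₀) • (u z)⁻¹))
          (nhdsWithin z₀ {z₀}ᶜ) (nhds (u z₀ * L)) := tendstoMatMul tendsto_const_nhds hL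
      have t2 : Tendsto (fun z => (z - z₀) • (1 : Matrix (Fin p) (Fin p) ℂ)
            - (z - z₀) • (v z * ((z - z₀) • (u z)⁻¹)))
          (nhdsWithin z₀ {z₀}ᶜ)
          (nhds ((0:ℂ) • (1 : Matrix (Fin p) (Fin p) ℂ) - (0:ℂ) • (v z₀ * L))) :=
        (hsub0.smul tendsto_const_nhds).sub (hsub0.smul (tendstoMatMul hvz hL))
      have := tendsto_nhds_unique (Tendsto.congr' e1 t1) t2
      rw [zero_smul, zero_smul, sub_zero] at this
      exact this
    constructor
    · apply le_antisymm
      · intro y hy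
        rw [LinearMap.mem_ker, Matrix.toLin'_apply] at hy
        have hcl : IsClosed ((LinearMap.range (Matrix.toLin' (u z₀)) : Submodule ℂ (Fin p → ℂ)) : Set (Fin p → ℂ)) :=
          Submodule.closed_of_finiteDimensional _
        have e1 : ∀ᶠ z in nhdsWithin z₀ {z₀}ᶜ,
            u z₀ *ᵥ ((u z)⁻¹ *ᵥ y) = y - v z *ᵥ (((z - z₀) • (u z)⁻¹) *ᵥ y) := by
          filter_upwards [huunit] with z hz
          have h2 : u z *ᵥ ((u z)⁻¹ *ᵥ y) = y := by
            rw [Matrix.mulVec_mulVec, Matrix.mul_nonsing_inv _ hz, Matrix.one_mulVec]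
          have h3 : u z₀ = u z - (z - z₀) • v z := by rw [huv z, add_sub_cancel_right]
          rw [h3, Matrix.sub_mulVec, h2]
          congr 1
          rw [Matrix.smul_mulVec, ← Matrix.mulVec_smul, Matrix.smul_mulVec]
        have t2 : Tendsto (fun z => y - v z *ᵥ (((z - z₀) • (u z)⁻¹) *ᵥ y))
            (nhdsWithin z₀ {z₀}ᶜ) (nhds (y - v z₀ *ᵥ (L *ᵥ y))) :=
          tendsto_const_nhds.sub (tendstoMatVec hvz (tendstoMatVec hL tendsto_const_nhds))
        rw [hy, Matrix.mulVec_zero, sub_zero] at t2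
        have t3 : Tendsto (fun z => u z₀ *ᵥ ((u z)⁻¹ *ᵥ y))
            (nhdsWithin z₀ {z₀}ᶜ) (nhds y) :=
          Tendsto.congr' (EventuallyEq.symm e1) t2
        have hmem : ∀ᶠ z in nhdsWithin z₀ {z₀}ᶜ,
            u z₀ *ᵥ ((u z)⁻¹ *ᵥ y)
              ∈ ((LinearMap.range (Matrix.toLin' (u z₀)) : Submodule ℂ (Fin p → ℂ)) : Set (Fin p → ℂ)) :=
          Eventually.of_forall fun z => ⟨(u z)⁻¹ *ᵥ y, Matrix.toLin'_apply _ _⟩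
        exact hcl.mem_of_tendsto t3 hmem
      · rintro x ⟨c, rfl⟩
        rw [LinearMap.mem_ker, Matrix.toLin'_apply, Matrix.toLin'_apply,
          Matrix.mulVec_mulVec, hLu, Matrix.zero_mulVec]
    · apply le_antisymm
      · rintro x ⟨c, rfl⟩
        rw [LinearMap.mem_ker, Matrix.toLin'_apply, Matrix.toLin'_apply,
          Matrix.mulVec_mulVec, huL, Matrix.zero_mulVec]
      · intro x hx
        rw [LinearMap.mem_ker, Matrix.toLin'_apply] at hx
        have e1 : ∀ᶠ z in nhdsWithin z₀ {z₀}ᶜ,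
            x = ((z - z₀) • (u z)⁻¹) *ᵥ (v z *ᵥ x) := by
          filter_upwards [huunit] with z hz
          have h2 : u z *ᵥ x = (z - z₀) • (v z *ᵥ x) := by
            conv_lhs => rw [huv z]
            rw [Matrix.add_mulVec, hx, zero_add, Matrix.smul_mulVec]
          calc x = ((u z)⁻¹ * u z) *ᵥ x := by
                rw [Matrix.nonsing_inv_mul _ hz, Matrix.one_mulVec]
            _ = (u z)⁻¹ *ᵥ (u z *ᵥ x) := (Matrix.mulVec_mulVec _ _ _).symm
            _ = ((z - z₀) • (u z)⁻¹) *ᵥ (v z *ᵥ x) := by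
                rw [h2, Matrix.mulVec_smul, Matrix.smul_mulVec]
        have t2 : Tendsto (fun z => ((z - z₀) • (u z)⁻¹) *ᵥ (v z *ᵥ x))
            (nhdsWithin z₀ {z₀}ᶜ) (nhds (L *ᵥ (v z₀ *ᵥ x))) :=
          tendstoMatVec hL (tendstoMatVec hvz tendsto_const_nhds)
        have hxeq : x = L *ᵥ (v z₀ *ᵥ x) :=
          tendsto_nhds_unique (Tendsto.congr' e1 tendsto_const_nhds) t2
        exact ⟨v z₀ *ᵥ x, by rw [Matrix.toLin'_apply, ← hxeq]⟩
  have fwd : n = k → ∃ L : Matrix (Fin p) (Fin p) ℂ, L ≠ 0 ∧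
      Tendsto (fun z => (z - z₀) • (u z)⁻¹) (nhdsWithin z₀ {z₀}ᶜ) (nhds L) := by
    intro hnkeq
    have he : ∀ᶠ z in nhdsWithin z₀ {z₀}ᶜ, d z * Q.det = (w z).det := by
      filter_upwards [hdetw.filter_mono nhdsWithin_le_nhds, hz_ne] with z h1 h2
      have hzz : (z - z₀) ^ k ≠ 0 := pow_ne_zero _ (sub_ne_zero.2 h2)
      apply mul_left_cancel₀ hzz
      calc (z - z₀) ^ k * (d z * Q.det) = (z - z₀) ^ k * d z * Q.det := by ring
        _ = (w z).det * (z - z₀) ^ n := h1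
        _ = (z - z₀) ^ k * (w z).det := by rw [hnkeq]; ring
    have hdw0 : d z₀ * Q.det = (w z₀).det := tendsto_nhds_unique (Tendsto.congr' he tdQ) tdetw
    have hdw_ne : (w z₀).det ≠ 0 := by rw [← hdw0]; exact hdQ
    have hwinv_cont : ContinuousAt (fun z => (w z)⁻¹) z₀ := contAtMatInv hw_cont hdw_ne
    have hdetw_ne_ev : ∀ᶠ z in nhds z₀, (w z).det ≠ 0 :=
      (contAtMatDet hw_cont).eventually_ne hdw_ne
    have e1 : ∀ᶠ z in nhdsWithin z₀ {z₀}ᶜ,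
        (z - z₀) • (u z)⁻¹ = Q * ((z - z₀) • dE p n + dF p n) * (w z)⁻¹ := by
      filter_upwards [huunit, hdetw_ne_ev.filter_mono nhdsWithin_le_nhds, hz_ne]
        with z h1 h2 h3
      have hzz : z - z₀ ≠ 0 := sub_ne_zero.2 h3
      have hDdet : IsUnit (D z).det := by
        rw [hDdef]
        rw [det_dE_add_smul_dF hnp]
        exact isUnit_iff_ne_zero.2 (pow_ne_zero _ hzz)
      have hDinv : (D z)⁻¹ = dE p n + (z - z₀)⁻¹ • dF p n :=
        Matrix.inv_eq_right_inv (dE_add_smul_dF_mul_inv hzz)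
      have hu_eq : u z = w z * D z * Q⁻¹ := by
        calc u z = u z * Q * Q⁻¹ := by
              rw [mul_assoc, Matrix.mul_nonsing_inv _ hQu, mul_one]
          _ = w z * D z * Q⁻¹ := by rw [hkey z]
      have hinv : (u z)⁻¹ = Q * ((D z)⁻¹ * (w z)⁻¹) := by
        rw [hu_eq, Matrix.mul_inv_rev, Matrix.mul_inv_rev,
          Matrix.nonsing_inv_nonsing_inv _ hQu]
      rw [hinv, hDinv]
      have hsm : (z - z₀) • (dE p n + (z - z₀)⁻¹ • dF p n)
          = (z - z₀) • dE p n + dF p n := by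
        rw [smul_add, smul_smul, mul_inv_cancel₀ hzz, one_smul]
      rw [← mul_smul_comm, ← smul_mul_assoc, hsm, ← mul_assoc]
    have ht : Tendsto (fun z => Q * ((z - z₀) • dE p n + dF p n) * (w z)⁻¹)
        (nhds z₀) (nhds (Q * ((z₀ - z₀) • dE p n + dF p n) * (w z₀)⁻¹)) := by
      refine (contAtMatMul (contAtMatMul continuousAt_const ?_) hwinv_cont).tendsto
      exact (((continuous_id.sub continuous_const).continuousAt).smul
        continuousAt_const).add continuousAt_const
    rw [sub_self, zero_smul, zero_add] at ht
    have hLlim : Tendsto (fun z => (z - z₀) • (u z)⁻¹) (nhdsWithin z₀ {z₀}ᶜ)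
        (nhds (Q * dF p n * (w z₀)⁻¹)) :=
      Tendsto.congr' (EventuallyEq.symm e1) (ht.mono_left nhdsWithin_le_nhds)
    refine ⟨Q * dF p n * (w z₀)⁻¹, ?_, hLlim⟩
    intro hL0
    have hwu : IsUnit (w z₀).det := isUnit_iff_ne_zero.2 hdw_ne
    have h1 : Q⁻¹ * (Q * dF p n * (w z₀)⁻¹) * w z₀ = dF p n := by
      calc Q⁻¹ * (Q * dF p n * (w z₀)⁻¹) * w z₀
          = Q⁻¹ * (Q * (dF p n * ((w z₀)⁻¹ * w z₀))) := by
            simp only [Matrix.mul_assoc]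
        _ = Q⁻¹ * Q * dF p n := by
            rw [Matrix.nonsing_inv_mul _ hwu, mul_one, ← mul_assoc]
        _ = dF p n := by rw [Matrix.nonsing_inv_mul _ hQu, one_mul]
    rw [hL0, mul_zero, zero_mul] at h1
    have hp0 : 0 < p := by omega
    have h2 : dF p n ⟨p - 1, by omega⟩ ⟨p - 1, by omega⟩ = 1 := by
      rw [dF, Matrix.diagonal_apply_eq]
      rw [if_neg (by simp only [Fin.val_mk]; omega)]
    rw [← h1] at h2
    simp at h2
  have hw_an : ∀ i j, AnalyticAt ℂ (fun z => w z i j) z₀ := by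
    intro i j
    have h1 : (fun z => w z i j) =
        fun z => (∑ a, (∑ b, u z i b * Q b a) * dE p n a j)
               + (∑ a, (∑ b, v z i b * Q b a) * dF p n a j) := by
      funext z
      simp only [hwdef, Matrix.add_apply, Matrix.mul_apply]
    rw [h1]
    apply AnalyticAt.add
    · refine Finset.analyticAt_fun_sum _ fun a _ => ?_
      refine AnalyticAt.mul ?_ analyticAt_const
      exact Finset.analyticAt_fun_sum _ fun b _ => (hu i b).mul analyticAt_const
    · refine Finset.analyticAt_fun_sum _ fun a _ => ?_
      refine AnalyticAt.mul ?_ analyticAt_const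
      exact Finset.analyticAt_fun_sum _ fun b _ => (hv_an i b).mul analyticAt_const
  have rev : ∀ L : Matrix (Fin p) (Fin p) ℂ, L ≠ 0 →
      Tendsto (fun z => (z - z₀) • (u z)⁻¹) (nhdsWithin z₀ {z₀}ᶜ) (nhds L) → n = k := by
    intro L hL0 hL
    by_contra hne
    have hlt : n < k := lt_of_le_of_ne hnk hne
    have he : ∀ᶠ z in nhdsWithin z₀ {z₀}ᶜ,
        (w z).det = (z - z₀) ^ (k - n) * d z * Q.det := by
      filter_upwards [hdetw.filter_mono nhdsWithin_le_nhds, hz_ne] with z h1 h2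
      have hzz : (z - z₀) ≠ 0 := sub_ne_zero.2 h2
      apply mul_right_cancel₀ (pow_ne_zero n hzz)
      rw [← h1]
      have hpow : (z - z₀) ^ k = (z - z₀) ^ (k - n) * (z - z₀) ^ n := by
        rw [← pow_add]; congr 1; omega
      rw [hpow]; ring
    have t2 : Tendsto (fun z => (z - z₀) ^ (k - n) * d z * Q.det)
        (nhdsWithin z₀ {z₀}ᶜ) (nhds ((0:ℂ) ^ (k - n) * d z₀ * Q.det)) :=
      ((hsub0.pow (k - n)).mul
        ((hd.continuousAt.tendsto).mono_left nhdsWithin_le_nhds)).mul tendsto_const_nhds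
    rw [zero_pow (by omega : k - n ≠ 0), zero_mul, zero_mul] at t2
    have hdw0 : (w z₀).det = 0 := tendsto_nhds_unique (Tendsto.congr' he tdetw) t2
    obtain ⟨x, hx0, hwx⟩ := Matrix.exists_mulVec_eq_zero_iff.2 hdw0
    have hwx_an : ∀ i, AnalyticAt ℂ (fun z => (w z *ᵥ x) i) z₀ := by
      intro i
      have h1 : (fun z => (w z *ᵥ x) i) = fun z => ∑ j, w z i j * x j := by
        funext z
        simp [Matrix.mulVec, dotProduct]
      rw [h1]
      exact Finset.analyticAt_fun_sum _ fun j _ => (hw_an i j).mul analyticAt_const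
    set h : ℂ → (Fin p → ℂ) :=
      fun z i => dslope (fun ζ => (w ζ *ᵥ x) i) z₀ z with hhdef
    have hh_cont : ContinuousAt h z₀ :=
      continuousAt_pi.2 fun i =>
        continuousAt_dslope_same.2 (hwx_an i).differentiableAt
    have hxfact : ∀ z, w z *ᵥ x = (z - z₀) • h z := by
      intro z; funext i
      have h5 := sub_smul_dslope (fun ζ => (w ζ *ᵥ x) i) z₀ z
      have h6 : (w z₀ *ᵥ x) i = 0 := by rw [hwx]; rfl
      simp only [smul_eq_mul] at h5
      simp only [Pi.smul_apply, smul_eq_mul, hhdef]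
      rw [h5, h6, sub_zero]
    have hdetw_unit : ∀ᶠ z in nhdsWithin z₀ {z₀}ᶜ, IsUnit (w z).det := by
      filter_upwards [he, hd_ne.filter_mono nhdsWithin_le_nhds, hz_ne] with z h1 h2 h3
      rw [h1]
      exact isUnit_iff_ne_zero.2
        (mul_ne_zero (mul_ne_zero (pow_ne_zero _ (sub_ne_zero.2 h3)) h2) hQu.ne_zero)
    have e2 : ∀ᶠ z in nhdsWithin z₀ {z₀}ᶜ,
        x = D z *ᵥ (Q⁻¹ *ᵥ (((z - z₀) • (u z)⁻¹) *ᵥ h z)) := by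
      filter_upwards [huunit, hdetw_unit, hz_ne] with z h1 h2 h3
      have hzz : z - z₀ ≠ 0 := sub_ne_zero.2 h3
      have hDdet : IsUnit (D z).det := by
        rw [hDdef]
        rw [det_dE_add_smul_dF hnp]
        exact isUnit_iff_ne_zero.2 (pow_ne_zero _ hzz)
      have hw_eq : w z = u z * Q * (D z)⁻¹ := by
        calc w z = w z * D z * (D z)⁻¹ := by
              rw [mul_assoc, Matrix.mul_nonsing_inv _ hDdet, mul_one]
          _ = u z * Q * (D z)⁻¹ := by rw [hkey z]
      have hwinv : (w z)⁻¹ = D z * (Q⁻¹ * (u z)⁻¹) := by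
        rw [hw_eq, Matrix.mul_inv_rev, Matrix.mul_inv_rev,
          Matrix.nonsing_inv_nonsing_inv _ hDdet]
      calc x = (w z)⁻¹ *ᵥ (w z *ᵥ x) := by
            rw [Matrix.mulVec_mulVec, Matrix.nonsing_inv_mul _ h2, Matrix.one_mulVec]
        _ = (w z)⁻¹ *ᵥ ((z - z₀) • h z) := by rw [hxfact z]
        _ = D z *ᵥ (Q⁻¹ *ᵥ (((z - z₀) • (u z)⁻¹) *ᵥ h z)) := by
            rw [hwinv, ← Matrix.mulVec_mulVec, ← Matrix.mulVec_mulVec,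
              Matrix.mulVec_smul, Matrix.smul_mulVec]
    have hD_cont : Tendsto D (nhdsWithin z₀ {z₀}ᶜ) (nhds (D z₀)) := by
      refine ContinuousAt.tendsto ?_ |>.mono_left nhdsWithin_le_nhds
      rw [hDdef]
      exact continuousAt_const.add
        (((continuous_id.sub continuous_const).continuousAt).smul continuousAt_const)
    have t3 : Tendsto (fun z => D z *ᵥ (Q⁻¹ *ᵥ (((z - z₀) • (u z)⁻¹) *ᵥ h z)))
        (nhdsWithin z₀ {z₀}ᶜ) (nhds (D z₀ *ᵥ (Q⁻¹ *ᵥ (L *ᵥ h z₀)))) :=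
      tendstoMatVec hD_cont (tendstoMatVec tendsto_const_nhds
        (tendstoMatVec hL (hh_cont.tendsto.mono_left nhdsWithin_le_nhds)))
    have hx_eq : x = D z₀ *ᵥ (Q⁻¹ *ᵥ (L *ᵥ h z₀)) :=
      tendsto_nhds_unique (Tendsto.congr' e2 tendsto_const_nhds) t3
    have hD0 : D z₀ = dE p n := by
      rw [hDdef]; simp
    have hmem : L *ᵥ h z₀ ∈ LinearMap.ker (Matrix.toLin' (u z₀)) := by
      rw [← (main2 L hL).2]
      exact ⟨h z₀, Matrix.toLin'_apply _ _⟩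
    obtain ⟨c, hc⟩ := hQrange hmem
    rw [Matrix.toLin'_apply] at hc
    have hEQF : dE p n * Q⁻¹ * (Q * dF p n) = 0 := by
      rw [mul_assoc, ← mul_assoc Q⁻¹ Q, Matrix.nonsing_inv_mul _ hQu, one_mul, dE_mul_dF]
    have : x = 0 := by
      rw [hx_eq, hD0, ← hc, Matrix.mulVec_mulVec, Matrix.mulVec_mulVec, hEQF,
        Matrix.zero_mulVec]
    exact hx0 this
  refine ⟨⟨fun hh => fwd hh, fun ⟨L, hL0, hLt⟩ => rev L hL0 hLt⟩, fun _ L hLt => main2 L hLt⟩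
end

section
/- There exist positive constants c̃₁, c̃₂ and a neighborhood V of the identity in the set of lower-triangular p×p complex matrices with positive diagonal, such that for all A ∈ V: c̃₁‖𝟙 − A‖ ≤ ‖𝟙 − AA*‖ ≤ c̃₂‖𝟙 − A‖. -/
attribute [local instance] Matrix.normedAddCommGroup

/-- Near the identity, on lower-triangular matrices with positive diagonal,
`‖𝟙 - A‖` and `‖𝟙 - AA*‖` are comparable: `c̃₁‖𝟙 - A‖ ≤ ‖𝟙 - AA*‖ ≤ c̃₂‖𝟙 - A‖`. -/
theorem stmt17 (p : ℕ) :
    ∃ c₁ c₂ ε : ℝ, 0 < c₁ ∧ 0 < c₂ ∧ 0 < ε ∧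
      ∀ A : Matrix (Fin p) (Fin p) ℂ,
        (∀ i j : Fin p, i < j → A i j = 0) →
        (∀ i : Fin p, 0 < (A i i).re ∧ (A i i).im = 0) →
        ‖(1 : Matrix (Fin p) (Fin p) ℂ) - A‖ < ε →
        c₁ * ‖(1 : Matrix (Fin p) (Fin p) ℂ) - A‖
            ≤ ‖(1 : Matrix (Fin p) (Fin p) ℂ) - A * A.conjTranspose‖ ∧
          ‖(1 : Matrix (Fin p) (Fin p) ℂ) - A * A.conjTranspose‖
            ≤ c₂ * ‖(1 : Matrix (Fin p) (Fin p) ℂ) - A‖ := by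
  refine ⟨1/2, 3, 1/(2*(p+1)), by norm_num, by norm_num, by positivity, ?_⟩
  intro A hlow hdiag hε
  set B : Matrix (Fin p) (Fin p) ℂ := 1 - A with hB
  have hBd : ∀ i j : Fin p, i < j → B i j = 0 := by
    intro i j hij
    simp [hB, Matrix.sub_apply, Matrix.one_apply, hij.ne, hlow i j hij]
  have hBre : ∀ i : Fin p, (B i i).im = 0 := by
    intro i
    simp [hB, Matrix.sub_apply, Matrix.one_apply, (hdiag i).2]
  -- key identity
  have hkey : (1 : Matrix (Fin p) (Fin p) ℂ) - A * A.conjTranspose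
      = (B + B.conjTranspose) - B * B.conjTranspose := by
    have hA : A = 1 - B := by simp [hB]
    rw [hA]
    simp only [Matrix.conjTranspose_sub, Matrix.conjTranspose_one]
    noncomm_ring
  have hBnorm_nonneg : (0:ℝ) ≤ ‖B‖ := norm_nonneg _
  -- bound on product
  have hprod : ‖B * B.conjTranspose‖ ≤ (p:ℝ) * (‖B‖ * ‖B‖) := by
    rw [Matrix.norm_le_iff (by positivity)]
    intro i j
    have : (B * B.conjTranspose) i j = ∑ k, B i k * star (B j k) := by
      simp [Matrix.mul_apply, Matrix.conjTranspose_apply]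
    rw [this]
    calc ‖∑ k, B i k * star (B j k)‖ ≤ ∑ k : Fin p, ‖B i k * star (B j k)‖ :=
          norm_sum_le _ _
      _ ≤ ∑ _k : Fin p, ‖B‖ * ‖B‖ := by
          refine Finset.sum_le_sum fun k _ => ?_
          rw [norm_mul, norm_star]
          exact mul_le_mul (Matrix.norm_entry_le_entrywise_sup_norm B)
            (Matrix.norm_entry_le_entrywise_sup_norm B) (norm_nonneg _) hBnorm_nonneg
      _ = (p:ℝ) * (‖B‖ * ‖B‖) := by simp [mul_comm]
  have hε' : ‖B‖ < 1/(2*(p+1)) := hε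
  have hprod' : ‖B * B.conjTranspose‖ ≤ (1/2) * ‖B‖ := by
    refine hprod.trans ?_
    have h1 : (p:ℝ) * ‖B‖ ≤ 1/2 := by
      calc (p:ℝ) * ‖B‖ ≤ (p:ℝ) * (1/(2*(p+1))) := by
            exact mul_le_mul_of_nonneg_left hε'.le (Nat.cast_nonneg p)
        _ ≤ 1/2 := by
            rw [mul_one_div, div_le_div_iff₀ (by positivity) (by norm_num : (0:ℝ) < 2)]
            nlinarith [Nat.cast_nonneg (α := ℝ) p]
    calc (p:ℝ) * (‖B‖ * ‖B‖) = ((p:ℝ) * ‖B‖) * ‖B‖ := by ring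
      _ ≤ (1/2) * ‖B‖ := mul_le_mul_of_nonneg_right h1 hBnorm_nonneg
  -- lower bound on ‖B + B.conjTranspose‖
  have hsym : ‖B‖ ≤ ‖B + B.conjTranspose‖ := by
    rw [Matrix.norm_le_iff (norm_nonneg _)]
    intro i j
    rcases lt_trichotomy i j with h | h | h
    · simp [hBd i j h]
    · subst h
      have hre : star (B i i) = B i i := by
        rw [Complex.star_def, Complex.conj_eq_iff_im]; exact hBre i
      have : (B + B.conjTranspose) i i = 2 * B i i := by
        simp [Matrix.add_apply, Matrix.conjTranspose_apply, hre]; ring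
      calc ‖B i i‖ ≤ 2 * ‖B i i‖ := by nlinarith [norm_nonneg (B i i)]
        _ = ‖(B + B.conjTranspose) i i‖ := by rw [this, norm_mul]; norm_num
        _ ≤ ‖B + B.conjTranspose‖ := Matrix.norm_entry_le_entrywise_sup_norm _
    · have : (B + B.conjTranspose) i j = B i j := by
        simp [Matrix.add_apply, Matrix.conjTranspose_apply, hBd j i h]
      calc ‖B i j‖ = ‖(B + B.conjTranspose) i j‖ := by rw [this]
        _ ≤ ‖B + B.conjTranspose‖ := Matrix.norm_entry_le_entrywise_sup_norm _
  constructor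
  · -- lower bound
    rw [hkey]
    have h1 : ‖B + B.conjTranspose‖ - ‖B * B.conjTranspose‖ ≤ ‖(B + B.conjTranspose) - B * B.conjTranspose‖ := by
      have := norm_sub_norm_le (B + B.conjTranspose) (B * B.conjTranspose)
      linarith
    have : ‖B‖ - (1/2) * ‖B‖ ≤ ‖(B + B.conjTranspose) - B * B.conjTranspose‖ := by linarith
    calc (1/2) * ‖(1 : Matrix (Fin p) (Fin p) ℂ) - A‖ = ‖B‖ - (1/2) * ‖B‖ := by
          rw [← hB]; ring
      _ ≤ _ := this
  · -- upper bound
    rw [hkey]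
    calc ‖(B + B.conjTranspose) - B * B.conjTranspose‖ ≤ ‖B + B.conjTranspose‖ + ‖B * B.conjTranspose‖ := norm_sub_le _ _
      _ ≤ (‖B‖ + ‖B.conjTranspose‖) + (1/2) * ‖B‖ := add_le_add (norm_add_le _ _) hprod'
      _ = 3 * ‖B‖ - (1/2) * ‖B‖ := by rw [Matrix.norm_conjTranspose]; ring
      _ ≤ 3 * ‖(1 : Matrix (Fin p) (Fin p) ℂ) - A‖ := by rw [← hB]; linarith
end
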